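/- arXiv:1010.1946 — 3 statements merged into one kernel-verified Lean document; each statement's English description precedes it below -/
import Mathlib

section
/- Let R ⊇ ℚ be a field and let Y, Z ∈ H⟦ℏ⟧[[Q]]. Assume: (i) for every i ∈ {1,…,n}, the Q^0-coefficient of Y(x=α_i,ℏ,Q) is a nonzero element of R_α and every Q^d-coefficient with d ≥ 1 lies in R_α(ℏ); (ii) Z is recursive; (iii) the pair (Y,Z) satisfies the MPC. Then the part of Z involving only nonnegative powers of ℏ vanishes if and only if Z = 0. -/
open Finset

noncomputable section

namespace Stmt1

variable (n : ℕ) (R : Type) [Field R] [Algebra ℚ R]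

/-- The multiplicative set of (images in `R[α_1,…,α_n]` of) nonzero elements of
`ℚ[α_1,…,α_n]`. -/
def qSet : Submonoid (MvPolynomial (Fin n) R) :=
  Submonoid.map (MvPolynomial.map (algebraMap ℚ R) : MvPolynomial (Fin n) ℚ →+* _).toMonoidHom
    (nonZeroDivisors (MvPolynomial (Fin n) ℚ))

/-- `R_α`: the localization of `R[α_1,…,α_n]` at the nonzero elements of `ℚ[α_1,…,α_n]`. -/
abbrev Ra := Localization (qSet n R)

/-- `H = R[α_1,…,α_n, x]/((x-α_1)⋯(x-α_n))`, realized as a quotient of the polynomial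
ring on the variables `α_i` (`some i`) and `x` (`none`). -/
abbrev Hring := MvPolynomial (Option (Fin n)) R ⧸
  Ideal.span ({∏ i : Fin n,
      (MvPolynomial.X (none : Option (Fin n)) - MvPolynomial.X (some i))} :
    Set (MvPolynomial (Option (Fin n)) R))

/-- The canonical map `R[α] → R_α`. -/
def toRa : MvPolynomial (Fin n) R →+* Ra n R := algebraMap _ _

/-- The indeterminates `α_i` as elements of `R_α`. -/
def aR (i : Fin n) : Ra n R := toRa n R (MvPolynomial.X i)

/-- The canonical map `ℚ → R_α`. -/
def qmap : ℚ →+* Ra n R :=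
  (toRa n R).comp ((MvPolynomial.C).comp (algebraMap ℚ R))

/-- Evaluation `x = α_i : H → R_α`. -/
def evH (i : Fin n) : Hring n R →+* Ra n R :=
  Ideal.Quotient.lift _
    (MvPolynomial.eval₂Hom ((toRa n R).comp MvPolynomial.C)
      (fun v => match v with
        | none => aR n R i
        | some k => aR n R k)) (by
    intro f hf
    rw [Ideal.mem_span_singleton] at hf
    obtain ⟨g, rfl⟩ := hf
    rw [map_mul]
    have h0 : (MvPolynomial.eval₂Hom ((toRa n R).comp MvPolynomial.C)
        (fun v : Option (Fin n) => match v with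
          | none => aR n R i
          | some k => aR n R k))
        (∏ j : Fin n,
          (MvPolynomial.X (none : Option (Fin n)) - MvPolynomial.X (some j))) = 0 := by
      rw [map_prod]
      refine Finset.prod_eq_zero (Finset.mem_univ i) ?_
      simp
    rw [h0, zero_mul])

/-- Coefficientwise application of a ring homomorphism to a Laurent series. -/
def mapLS {A B : Type*} [CommRing A] [CommRing B] (f : A →+* B)
    (x : LaurentSeries A) : LaurentSeries B where
  coeff := fun g => f (x.coeff g)
  isPWO_support' := x.isPWO_support'.mono (by
    intro g hg
    simp only [Function.mem_support] at hg ⊢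
    exact fun h0 => hg (by rw [h0, map_zero]))

/-- Evaluation at `x = α_i` of an element of `H⟦ℏ⟧[[Q]]` (given by its `Q`-coefficients). -/
def ZE (Z : ℕ → LaurentSeries (Hring n R)) (i : Fin n) : ℕ → LaurentSeries (Ra n R) :=
  fun d => mapLS (evH n R i) (Z d)

/-- The Laurent-series expansion (at `ℏ⁻¹ = 0`) of a polynomial in `ℏ`; the variable of
`LaurentSeries` is `X = ℏ⁻¹`. -/
def hEv : Polynomial (Ra n R) →+* LaurentSeries (Ra n R) :=
  Polynomial.eval₂RingHom (HahnSeries.C : Ra n R →+* LaurentSeries (Ra n R))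
    (HahnSeries.single (-1 : ℤ) (1 : Ra n R))

/-- `f` is the Laurent expansion at `ℏ⁻¹ = 0` of the rational function `p/q` of `ℏ`. -/
def IsExp (f : LaurentSeries (Ra n R)) (p q : Polynomial (Ra n R)) : Prop :=
  hEv n R q * f = hEv n R p

/-- `f` lies in (the image of) `R_α(ℏ)`. -/
def MemRat (f : LaurentSeries (Ra n R)) : Prop :=
  ∃ p q : Polynomial (Ra n R), q ≠ 0 ∧ IsExp n R f p q

/-- `f ∈ R_α(ℏ)` is regular at `ℏ = c`. -/
def RegAt (f : LaurentSeries (Ra n R)) (c : Ra n R) : Prop :=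
  ∃ p q : Polynomial (Ra n R), IsUnit (Polynomial.eval c q) ∧ IsExp n R f p q

open Classical in
/-- The value at `ℏ = c` of (the rational function represented by) `f`. -/
def evalAt (f : LaurentSeries (Ra n R)) (c : Ra n R) : Ra n R :=
  if h : RegAt n R f c then
    Polynomial.eval c h.choose * Ring.inverse (Polynomial.eval c h.choose_spec.choose)
  else 0

/-- `f` is a Laurent polynomial in `ℏ`, i.e. lies in `R_α[ℏ, ℏ⁻¹]`. -/
def IsLaurentPoly (f : LaurentSeries (Ra n R)) : Prop :=
  (Function.support f.coeff).Finite

/-- The expansion in `⟦ℏ⟧` of `1/(ℏ - c)`. -/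
def oneOverHbarSub (c : Ra n R) : LaurentSeries (Ra n R) :=
  (HahnSeries.ofPowerSeries ℤ (Ra n R))
    (PowerSeries.mk fun k => if k = 0 then 0 else c ^ (k - 1))

/-- `C`-recursivity (Definition 4.1), expressed in terms of the evaluations
`W i = Z(x = α_i, ℏ, Q)`. -/
def CRec (Cc : ℕ → Fin n → Fin n → Ra n R) (W : Fin n → ℕ → LaurentSeries (Ra n R)) : Prop :=
  ∀ dstar : ℕ,
    (∀ d, 1 ≤ d → d ≤ dstar → ∀ i, MemRat n R (W i (dstar - d))) →
    (∀ d, 1 ≤ d → d < dstar → ∀ i j : Fin n, i ≠ j →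
      RegAt n R (W i d) ((aR n R i - aR n R j) * Ring.inverse ((d : ℕ) : Ra n R))) →
    ∀ i : Fin n,
      IsLaurentPoly n R
        (W i dstar - ∑ d ∈ Icc 1 dstar, ∑ j ∈ univ.erase i,
          HahnSeries.C (Cc d i j) *
            oneOverHbarSub n R ((aR n R j - aR n R i) * Ring.inverse ((d : ℕ) : Ra n R)) *
            HahnSeries.C (evalAt n R (W j (dstar - d))
              ((aR n R j - aR n R i) * Ring.inverse ((d : ℕ) : Ra n R))))

/-- Recursivity: `C`-recursivity for some collection `C` of elements of `R_α`. -/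
def Recursive (W : Fin n → ℕ → LaurentSeries (Ra n R)) : Prop :=
  ∃ Cc : ℕ → Fin n → Fin n → Ra n R, CRec n R Cc W

/-- Negation substitution `ℏ ↦ -ℏ` on Laurent series in `ℏ⁻¹`. -/
def negSubst (f : LaurentSeries (Ra n R)) : LaurentSeries (Ra n R) where
  coeff := fun e => ((Int.negOnePow e : ℤˣ) : ℤ) • f.coeff e
  isPWO_support' := f.isPWO_support'.mono (by
    intro e he
    simp only [Function.mem_support] at he ⊢
    exact fun h0 => he (by rw [h0]; simp))

/-- The coefficient of `z^A Q^b` in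
`Φ_{Y,Z}(ℏ,z,Q) = Σ_i (e^{α_i z}/∏_{k≠i}(α_i-α_k)) Y(α_i,ℏ,Q e^{ℏz}) Z(α_i,-ℏ,Q)`,
in terms of the evaluations `WY i = Y(x=α_i,·,·)`, `WZ i = Z(x=α_i,·,·)`. -/
def PhiCoef (WY WZ : Fin n → ℕ → LaurentSeries (Ra n R)) (A b : ℕ) : LaurentSeries (Ra n R) :=
  ∑ i : Fin n,
    HahnSeries.C (Ring.inverse (∏ k ∈ univ.erase i, (aR n R i - aR n R k))) *
      ∑ dd ∈ Finset.HasAntidiagonal.antidiagonal b, ∑ kk ∈ Finset.HasAntidiagonal.antidiagonal A,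
        HahnSeries.C (qmap n R ((1 : ℚ) / kk.1.factorial / kk.2.factorial) *
            aR n R i ^ kk.1 * ((dd.1 : ℕ) : Ra n R) ^ kk.2) *
          (HahnSeries.single (-1 : ℤ) (1 : Ra n R)) ^ kk.2 *
          WY i dd.1 * negSubst n R (WZ i dd.2)

/-- The mutual polynomiality condition: `Φ_{Y,Z} ∈ R_α[ℏ][[z,Q]]`. -/
def MPC (WY WZ : Fin n → ℕ → LaurentSeries (Ra n R)) : Prop :=
  ∀ A b : ℕ, ∃ p : Polynomial (Ra n R), PhiCoef n R WY WZ A b = hEv n R p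

end Stmt1

namespace Stmt1

variable (n : ℕ) (R : Type) [Field R] [Algebra ℚ R]

lemma qmapPoly_injective :
    Function.Injective
      (MvPolynomial.map (algebraMap ℚ R) : MvPolynomial (Fin n) ℚ → MvPolynomial (Fin n) R) :=
  MvPolynomial.map_injective _ (algebraMap ℚ R).injective

lemma qSet_le : qSet n R ≤ nonZeroDivisors (MvPolynomial (Fin n) R) := by
  rintro x ⟨p, hp, rfl⟩
  have hp0 : p ≠ 0 := nonZeroDivisors.ne_zero hp
  refine mem_nonZeroDivisors_of_ne_zero ?_
  intro h
  exact hp0 (qmapPoly_injective n R (by simpa using h))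

instance : IsDomain (Ra n R) :=
  IsLocalization.isDomain_of_le_nonZeroDivisors _ (qSet_le n R)

lemma toRa_injective : Function.Injective (toRa n R) :=
  IsLocalization.injective _ (qSet_le n R)

lemma isUnit_qimg (p : MvPolynomial (Fin n) ℚ) (hp : p ≠ 0) :
    IsUnit (toRa n R (MvPolynomial.map (algebraMap ℚ R) p)) :=
  IsLocalization.map_units (M := qSet n R) _
    ⟨_, ⟨p, mem_nonZeroDivisors_of_ne_zero hp, rfl⟩⟩

lemma isUnit_aR_sub {i j : Fin n} (hij : i ≠ j) : IsUnit (aR n R i - aR n R j) := by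
  have h := isUnit_qimg n R (MvPolynomial.X i - MvPolynomial.X j)
    (sub_ne_zero.mpr (fun h => hij (MvPolynomial.X_injective h)))
  simpa [aR, map_sub] using h

lemma aR_injective : Function.Injective (aR n R) := by
  intro i j h
  by_contra hij
  have := isUnit_aR_sub n R hij
  rw [h, sub_self] at this
  exact not_isUnit_zero this

lemma isUnit_qmap (q : ℚ) (hq : q ≠ 0) : IsUnit (qmap n R q) := by
  have h := isUnit_qimg n R (MvPolynomial.C q) (by simpa using hq)
  simpa [qmap, MvPolynomial.map_C] using h

lemma mapLS_zero {A B : Type*} [CommRing A] [CommRing B] (f : A →+* B) :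
    mapLS f 0 = 0 := by
  ext e
  exact map_zero f

lemma negSubst_zero : negSubst n R 0 = 0 := by
  ext e
  simp [negSubst]

lemma hEv_coeff_pos (p : Polynomial (Ra n R)) (e : ℤ) (he : 1 ≤ e) :
    (hEv n R p).coeff e = 0 := by
  induction p using Polynomial.induction_on' with
  | add p q hp hq =>
      rw [(hEv n R).map_add, HahnSeries.coeff_add, hp, hq, add_zero]
  | monomial k a =>
      have h1 : hEv n R ((Polynomial.monomial k) a) = HahnSeries.single (-(k : ℤ)) a := by
        rw [hEv, Polynomial.coe_eval₂RingHom, Polynomial.eval₂_monomial, HahnSeries.single_pow,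
          HahnSeries.C_apply, HahnSeries.single_mul_single]
        norm_num
      rw [h1, HahnSeries.coeff_single]
      have h2 : e ≠ -(k : ℤ) := by omega
      simp [h2]

lemma vandermonde_vanish (v w : Fin n → Ra n R)
    (hv : ∀ i j : Fin n, i ≠ j → IsUnit (v i - v j))
    (hw : ∀ A : ℕ, ∑ i, v i ^ A * w i = 0) : ∀ i, w i = 0 := by
  classical
  set M : Matrix (Fin n) (Fin n) (Ra n R) := fun A i => v i ^ (A : ℕ) with hM
  have hdet : IsUnit M.det := by
    have : M = (Matrix.vandermonde v).transpose := by
      ext A i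
      rw [Matrix.transpose_apply, Matrix.vandermonde_apply]
    rw [this, Matrix.det_transpose, Matrix.det_vandermonde]
    refine Finset.prod_induction _ IsUnit (fun _ _ ha hb => ha.mul hb) isUnit_one (fun i _ => ?_)
    refine Finset.prod_induction _ IsUnit (fun _ _ ha hb => ha.mul hb) isUnit_one (fun j hj => ?_)
    exact hv j i (by rintro rfl; exact absurd (Finset.mem_Ioi.mp hj) (lt_irrefl _))
  have hMw : M.mulVec w = 0 := by
    funext A
    simpa [Matrix.mulVec, dotProduct, hM] using hw (A : ℕ)
  have : Invertible M := M.invertibleOfIsUnitDet hdet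
  have hw0 : w = 0 := by
    have h2 : w = (⅟M).mulVec (M.mulVec w) := by
      rw [Matrix.mulVec_mulVec, invOf_mul_self, Matrix.one_mulVec]
    rw [h2, hMw, Matrix.mulVec_zero]
  intro i
  rw [hw0]
  rfl

lemma coeff_sum_C_mul (c : Fin n → Ra n R) (N : Fin n → LaurentSeries (Ra n R)) (e : ℤ) :
    (∑ i : Fin n, HahnSeries.C (c i) * N i).coeff e = ∑ i : Fin n, c i * (N i).coeff e := by
  have h := map_sum (HahnSeries.coeff.addMonoidHom e)
    (fun i : Fin n => HahnSeries.C (c i) * N i) Finset.univ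
  trans ∑ i : Fin n, (HahnSeries.C (c i) * N i).coeff e
  · exact h
  · exact Finset.sum_congr rfl fun i _ => by
      rw [HahnSeries.C_mul_eq_smul, HahnSeries.coeff_smul, smul_eq_mul]

lemma evH_eq_zero (hn : 1 ≤ n) (h : Hring n R) (h0 : ∀ i, evH n R i h = 0) : h = 0 := by
  classical
  obtain ⟨f, rfl⟩ := Ideal.Quotient.mk_surjective h
  rw [Ideal.Quotient.eq_zero_iff_mem, Ideal.mem_span_singleton]
  set e := MvPolynomial.optionEquivLeft R (Fin n) with he
  set G : Polynomial (MvPolynomial (Fin n) R) :=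
    ∏ i : Fin n, (Polynomial.X - Polynomial.C (MvPolynomial.X i)) with hG
  have hGmonic : G.Monic :=
    Polynomial.monic_prod_of_monic _ _ fun i _ => Polynomial.monic_X_sub_C _
  have heg : e (∏ i : Fin n,
      (MvPolynomial.X (none : Option (Fin n)) - MvPolynomial.X (some i))) = G := by
    rw [map_prod]
    refine Finset.prod_congr rfl fun i _ => ?_
    rw [map_sub, MvPolynomial.optionEquivLeft_X_none, MvPolynomial.optionEquivLeft_X_some]
  have key : ∀ (i : Fin n) (f : MvPolynomial (Option (Fin n)) R),
      Polynomial.eval (aR n R i) (Polynomial.map (toRa n R) (e f)) =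
        MvPolynomial.eval₂Hom ((toRa n R).comp MvPolynomial.C)
          (fun v => match v with | none => aR n R i | some k => aR n R k) f := by
    intro i f
    have hhom : (Polynomial.evalRingHom (aR n R i)).comp
        ((Polynomial.mapRingHom (toRa n R)).comp e.toAlgHom.toRingHom) =
        MvPolynomial.eval₂Hom ((toRa n R).comp MvPolynomial.C)
          (fun v => match v with | none => aR n R i | some k => aR n R k) := by
      apply MvPolynomial.ringHom_ext
      · intro r
        simp [he, MvPolynomial.optionEquivLeft_C, toRa]
      · intro v
        match v with
        | none => simp [he, MvPolynomial.optionEquivLeft_X_none]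
        | some k => simp [he, MvPolynomial.optionEquivLeft_X_some, aR, toRa]
    exact DFunLike.congr_fun hhom f
  set F := e f with hF
  set q := F /ₘ G with hq
  set r := F %ₘ G with hr
  have hFr : r + G * q = F := Polynomial.modByMonic_add_div F G
  have hevG : ∀ i, Polynomial.eval (aR n R i) (Polynomial.map (toRa n R) G) = 0 := by
    intro i
    rw [hG, Polynomial.map_prod, Polynomial.eval_prod]
    refine Finset.prod_eq_zero (Finset.mem_univ i) ?_
    rw [Polynomial.map_sub, Polynomial.map_X, Polynomial.map_C, Polynomial.eval_sub,
      Polynomial.eval_X, Polynomial.eval_C, aR, sub_self]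
  have hevr : ∀ i, Polynomial.eval (aR n R i) (Polynomial.map (toRa n R) r) = 0 := by
    intro i
    have h1 : Polynomial.map (toRa n R) r =
        Polynomial.map (toRa n R) F -
          Polynomial.map (toRa n R) G * Polynomial.map (toRa n R) q := by
      rw [← Polynomial.map_mul, ← Polynomial.map_sub]
      congr 1
      rw [← hFr]; ring
    have hevF : Polynomial.eval (aR n R i) (Polynomial.map (toRa n R) F) = 0 := by
      rw [hF, key i f]
      have h2 := h0 i
      rwa [evH, Ideal.Quotient.lift_mk] at h2
    rw [h1, Polynomial.eval_sub, Polynomial.eval_mul, hevG, zero_mul, sub_zero, hevF]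
  have hGdeg : G.natDegree = n := by
    rw [hG, Polynomial.natDegree_prod_of_monic _ _ fun i _ => Polynomial.monic_X_sub_C _]
    simp
  have hr0 : r = 0 := by
    by_cases hc : r = 0
    · exact hc
    · have hdeg : (Polynomial.map (toRa n R) r).natDegree < Fintype.card (Fin n) := by
        rw [Fintype.card_fin]
        calc (Polynomial.map (toRa n R) r).natDegree
            ≤ r.natDegree := Polynomial.natDegree_map_le
          _ < G.natDegree := Polynomial.natDegree_lt_natDegree hc
              (Polynomial.degree_modByMonic_lt F hGmonic)
          _ = n := hGdeg
      have hz := Polynomial.eq_zero_of_natDegree_lt_card_of_eval_eq_zero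
        (Polynomial.map (toRa n R) r) (aR_injective n R) hevr hdeg
      exact Polynomial.map_injective _ (toRa_injective n R)
        (by rw [hz, Polynomial.map_zero])
  obtain ⟨c, hc⟩ := (Polynomial.modByMonic_eq_zero_iff_dvd hGmonic).mp hr0
  refine ⟨e.symm c, ?_⟩
  apply e.injective
  rw [map_mul, heg, AlgEquiv.apply_symm_apply]
  exact hc

end Stmt1

namespace Stmt1

/-- Proposition 4.3: if the `Q⁰`-coefficient of `Y(x=α_i,ℏ,Q)` is a nonzero
element of `R_α` and all higher `Q`-coefficients lie in `R_α(ℏ)` for every `i`, `Z` is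
recursive, and `(Y,Z)` satisfies the MPC, then the part of `Z` involving only nonnegative
powers of `ℏ` vanishes if and only if `Z = 0`. -/
theorem stmt1 (n : ℕ) (hn : 2 ≤ n) (R : Type) [Field R] [Algebra ℚ R]
    (Y Z : ℕ → LaurentSeries (Hring n R))
    (hY0 : ∀ i : Fin n, ∃ r : Ra n R, r ≠ 0 ∧ ZE n R Y i 0 = HahnSeries.C r)
    (hY : ∀ i : Fin n, ∀ d, 1 ≤ d → MemRat n R (ZE n R Y i d))
    (hZ : Recursive n R (ZE n R Z))
    (hMPC : MPC n R (ZE n R Y) (ZE n R Z)) :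
    (∀ d : ℕ, ∀ e : ℤ, e ≤ 0 → (Z d).coeff e = 0) ↔ ∀ d, Z d = 0 := by
  constructor
  · intro h0 d
    induction d using Nat.strong_induction_on with
    | _ b IH =>
      classical
      choose r hrne hWY using hY0
      have hzero_lt : ∀ (e : ℤ), 1 ≤ e → ∀ i : Fin n, (ZE n R Z i b).coeff e = 0 := by
        intro e he
        have hsum : ∀ A : ℕ, ∑ i : Fin n, aR n R i ^ A *
            (Ring.inverse (∏ k ∈ univ.erase i, (aR n R i - aR n R k)) * r i *
              (negSubst n R (ZE n R Z i b)).coeff e) = 0 := by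
          intro A
          obtain ⟨p, hp⟩ := hMPC A b
          have h1 : PhiCoef n R (ZE n R Y) (ZE n R Z) A b =
              ∑ i : Fin n, HahnSeries.C
                (Ring.inverse (∏ k ∈ univ.erase i, (aR n R i - aR n R k)) *
                  (qmap n R ((1 : ℚ) / (A.factorial : ℚ) / ((Nat.factorial 0 : ℕ) : ℚ)) *
                    aR n R i ^ A) * r i) *
                negSubst n R (ZE n R Z i b) := by
            rw [PhiCoef]
            refine Finset.sum_congr rfl fun i _ => ?_
            have hz1 : ∀ dd ∈ Finset.HasAntidiagonal.antidiagonal b, dd ≠ ((0 : ℕ), b) →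
                (∑ kk ∈ Finset.HasAntidiagonal.antidiagonal A,
                  HahnSeries.C (qmap n R ((1 : ℚ) / kk.1.factorial / kk.2.factorial) *
                      aR n R i ^ kk.1 * ((dd.1 : ℕ) : Ra n R) ^ kk.2) *
                    (HahnSeries.single (-1 : ℤ) (1 : Ra n R)) ^ kk.2 *
                    ZE n R Y i dd.1 * negSubst n R (ZE n R Z i dd.2)) = 0 := by
              intro dd hdd hne
              have hmem := Finset.HasAntidiagonal.mem_antidiagonal.mp hdd
              have hlt : dd.2 < b := by
                rcases Nat.lt_or_ge dd.2 b with h' | h'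
                · exact h'
                · exact absurd (Prod.ext (by omega) (by omega)) hne
              have hZ0 : ZE n R Z i dd.2 = 0 := by
                rw [ZE]; rw [IH dd.2 hlt]; exact mapLS_zero _
              refine Finset.sum_eq_zero fun kk _ => ?_
              rw [hZ0, negSubst_zero n R, mul_zero]
            rw [Finset.sum_eq_single ((0 : ℕ), b) hz1
              (fun h => absurd (Finset.HasAntidiagonal.mem_antidiagonal.mpr (by simp)) h)]
            have hz2 : ∀ kk ∈ Finset.HasAntidiagonal.antidiagonal A, kk ≠ ((A : ℕ), (0 : ℕ)) →
                (HahnSeries.C (qmap n R ((1 : ℚ) / kk.1.factorial / kk.2.factorial) *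
                    aR n R i ^ kk.1 * ((((0 : ℕ), b).1 : ℕ) : Ra n R) ^ kk.2) *
                  (HahnSeries.single (-1 : ℤ) (1 : Ra n R)) ^ kk.2 *
                  ZE n R Y i ((0 : ℕ), b).1 * negSubst n R (ZE n R Z i ((0 : ℕ), b).2)) = 0 := by
              intro kk hkk hne
              have hmem := Finset.HasAntidiagonal.mem_antidiagonal.mp hkk
              have hkk2 : kk.2 ≠ 0 := by
                intro h'
                exact hne (Prod.ext (by omega) (by omega))
              simp [zero_pow hkk2]
            rw [Finset.sum_eq_single ((A : ℕ), (0 : ℕ)) hz2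
              (fun h => absurd (Finset.HasAntidiagonal.mem_antidiagonal.mpr (by simp)) h)]
            have hCC : ∀ (a c : Ra n R) (x : LaurentSeries (Ra n R)),
                HahnSeries.C a * (HahnSeries.C c * x) = HahnSeries.C (a * c) * x := by
              intro a c x
              rw [← mul_assoc, ← map_mul]
            simp only [hWY i, pow_zero, mul_one, Nat.cast_zero]
            rw [mul_assoc, hCC, hCC]
          have h2 : ∑ i : Fin n,
              (Ring.inverse (∏ k ∈ univ.erase i, (aR n R i - aR n R k)) *
                (qmap n R ((1 : ℚ) / (A.factorial : ℚ) / ((Nat.factorial 0 : ℕ) : ℚ)) *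
                  aR n R i ^ A) * r i) *
              (negSubst n R (ZE n R Z i b)).coeff e = 0 := by
            rw [← coeff_sum_C_mul, ← h1, hp, hEv_coeff_pos n R p e he]
          have hqu : IsUnit (qmap n R
              ((1 : ℚ) / (A.factorial : ℚ) / ((Nat.factorial 0 : ℕ) : ℚ))) := by
            refine isUnit_qmap n R _ ?_
            refine div_ne_zero (div_ne_zero one_ne_zero ?_) ?_
            · exact_mod_cast A.factorial_ne_zero
            · exact_mod_cast Nat.factorial_ne_zero 0
          have h5 : qmap n R ((1 : ℚ) / (A.factorial : ℚ) / ((Nat.factorial 0 : ℕ) : ℚ)) *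
              ∑ i : Fin n, aR n R i ^ A *
                (Ring.inverse (∏ k ∈ univ.erase i, (aR n R i - aR n R k)) * r i *
                  (negSubst n R (ZE n R Z i b)).coeff e) = 0 := by
            rw [Finset.mul_sum, ← h2]
            exact Finset.sum_congr rfl fun i _ => by ring
          exact (hqu.mul_right_eq_zero).mp h5
        have hwz := vandermonde_vanish n R (aR n R)
          (fun i => Ring.inverse (∏ k ∈ univ.erase i, (aR n R i - aR n R k)) * r i *
            (negSubst n R (ZE n R Z i b)).coeff e)
          (fun i j hij => isUnit_aR_sub n R hij) hsum
        intro i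
        have hinv : IsUnit (Ring.inverse (∏ k ∈ univ.erase i, (aR n R i - aR n R k))) := by
          rw [isUnit_ringInverse]
          refine Finset.prod_induction _ IsUnit (fun _ _ ha hb => ha.mul hb) isUnit_one
            (fun k hk => isUnit_aR_sub n R ?_)
          exact fun h => (Finset.mem_erase.mp hk).1 h.symm
        have h6 : (negSubst n R (ZE n R Z i b)).coeff e = 0 := by
          have h7 : Ring.inverse (∏ k ∈ univ.erase i, (aR n R i - aR n R k)) *
              (r i * (negSubst n R (ZE n R Z i b)).coeff e) = 0 := by
            have h7' := hwz i
            rw [← mul_assoc]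
            exact h7'
          rcases mul_eq_zero.mp ((hinv.mul_right_eq_zero).mp h7) with h | h
          · exact absurd h (hrne i)
          · exact h
        have hu2 : IsUnit (((Int.negOnePow e : ℤˣ) : ℤ) : Ra n R) := by
          simpa using ((Int.negOnePow e).isUnit.map (Int.castRingHom (Ra n R)))
        have h9 : (((Int.negOnePow e : ℤˣ) : ℤ) : Ra n R) * (ZE n R Z i b).coeff e = 0 := by
          rw [← zsmul_eq_mul]
          exact h6
        exact (hu2.mul_right_eq_zero).mp h9
      ext g
      rw [HahnSeries.coeff_zero]
      rcases le_or_gt g 0 with h | h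
      · exact h0 b g h
      · refine evH_eq_zero n R (by omega) _ (fun i => ?_)
        exact hzero_lt g (by omega) i
  · intro h d e _
    rw [h d, HahnSeries.coeff_zero]


end Stmt1
end
end

section
/- For every i ∈ {1,…,n} and every d* ∈ ℤ^+, the coefficient of q^{d*} in 𝒴_{−l}(α_i,ℏ,q), minus Σ_{d=1}^{d*} Σ_{j≠i} (𝔠^j_i(d)/(ℏ − (α_j−α_i)/d)) times the coefficient of q^{d*−d} in 𝒴_{−l}(α_j,ℏ',q) evaluated at ℏ' = (α_j−α_i)/d, is a Laurent polynomial in ℏ, i.e. lies in ℚ_α[ℏ, ℏ^{−1}]. (In other words, the hypergeometric series 𝒴_{−l} is 𝔠-recursive.) -/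
set_option maxHeartbeats 1600000
set_option synthInstance.maxHeartbeats 400000

open Finset

noncomputable section

namespace Stmt4

/-- `ℚ_α = ℚ(α_1,…,α_n)`, the field of rational functions in the indeterminates `α_i`. -/
abbrev Qa (n : ℕ) := FractionRing (MvPolynomial (Fin n) ℚ)

/-- The indeterminates `α_i` as elements of `ℚ_α`. -/
def al (n : ℕ) (i : Fin n) : Qa n := algebraMap (MvPolynomial (Fin n) ℚ) (Qa n) (MvPolynomial.X i)

/-- The `q^d`-coefficient of `𝒴_{-l}(x, ℏ, q)`, as a rational function of `ℏ`
(the variable of `RatFunc`) with coefficients in `ℚ_α`. -/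
def Ynl (n l : ℕ) (a : Fin l → ℕ) (x : Qa n) (d : ℕ) : RatFunc (Qa n) :=
  (∏ k, ∏ r ∈ range (a k * d),
      (RatFunc.C ((a k : Qa n) * x) + (r : RatFunc (Qa n)) * RatFunc.X)) /
    ∏ r ∈ range d, ∏ k,
      (RatFunc.C (x - al n k) + ((r : RatFunc (Qa n)) + 1) * RatFunc.X)

/-- The structure constants `𝔠^j_i(d) ∈ ℚ_α`. -/
def frakC (n l : ℕ) (a : Fin l → ℕ) (i j : Fin n) (d : ℕ) : Qa n :=
  (∏ k, ∏ r ∈ range (a k * d),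
      ((a k : Qa n) * al n i + (r : Qa n) * ((al n j - al n i) / (d : Qa n)))) /
    ((d : Qa n) * ∏ r ∈ Icc 1 d, ∏ k ∈ univ.filter (fun k => ¬(r = d ∧ k = j)),
      (al n i - al n k + (r : Qa n) * ((al n j - al n i) / (d : Qa n))))

/-! ### Auxiliary infrastructure -/

lemma inj (n : ℕ) : Function.Injective (algebraMap (MvPolynomial (Fin n) ℚ) (Qa n)) :=
  IsFractionRing.injective _ _

instance (n : ℕ) : CharZero (Qa n) := charZero_of_injective_algebraMap (inj n)

lemma cast_eq (n : ℕ) (q : ℚ) :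
    algebraMap (MvPolynomial (Fin n) ℚ) (Qa n) (MvPolynomial.C q) = (q : Qa n) := by
  rw [show (algebraMap (MvPolynomial (Fin n) ℚ) (Qa n)) (MvPolynomial.C q)
      = ((algebraMap (MvPolynomial (Fin n) ℚ) (Qa n)).comp MvPolynomial.C) q from rfl,
    eq_ratCast]

lemma sum_ne (n : ℕ) (c : Fin n → ℚ) (k₀ : Fin n) (h : c k₀ ≠ 0) :
    (∑ m, (c m : Qa n) * al n m) ≠ 0 := by
  have he : (∑ m, (c m : Qa n) * al n m)
      = algebraMap (MvPolynomial (Fin n) ℚ) (Qa n)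
          (∑ m, MvPolynomial.C (c m) * MvPolynomial.X m) := by
    rw [map_sum]
    refine Finset.sum_congr rfl fun m _ => ?_
    rw [map_mul, cast_eq]; rfl
  rw [he]
  intro h0
  have h1 : (∑ m, MvPolynomial.C (c m) * MvPolynomial.X m : MvPolynomial (Fin n) ℚ) = 0 := by
    apply inj n; simpa using h0
  have h2 := congrArg (MvPolynomial.coeff (Finsupp.single k₀ 1)) h1
  simp [MvPolynomial.coeff_sum, MvPolynomial.coeff_C_mul, MvPolynomial.coeff_X',
    Finsupp.single_left_inj, Finset.sum_ite_eq'] at h2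
  exact h h2

lemma three_ne (n : ℕ) (i j k : Fin n) (q₁ q₂ q₃ : ℚ) (k₀ : Fin n)
    (h : (if k₀ = i then q₁ else 0) + (if k₀ = j then q₂ else 0) + (if k₀ = k then q₃ else 0) ≠ 0) :
    (q₁ : Qa n) * al n i + (q₂ : Qa n) * al n j + (q₃ : Qa n) * al n k ≠ 0 := by
  have := sum_ne n
    (fun m => (if m = i then q₁ else 0) + (if m = j then q₂ else 0) + (if m = k then q₃ else 0))
    k₀ h
  have he : (∑ m, ((((if m = i then q₁ else 0) + (if m = j then q₂ else 0)
        + (if m = k then q₃ else 0) : ℚ)) : Qa n) * al n m)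
      = (q₁ : Qa n) * al n i + (q₂ : Qa n) * al n j + (q₃ : Qa n) * al n k := by
    push_cast
    simp only [add_mul, Finset.sum_add_distrib, ite_mul, zero_mul, apply_ite (Rat.cast (K := Qa n)),
      Rat.cast_zero]
    rw [Finset.sum_ite_eq' univ i (fun m => (q₁ : Qa n) * al n m),
      Finset.sum_ite_eq' univ j (fun m => (q₂ : Qa n) * al n m),
      Finset.sum_ite_eq' univ k (fun m => (q₃ : Qa n) * al n m)]
    simp
  rw [← he]
  exact this

/-- the pole location -/
def cc (n : ℕ) (i j : Fin n) (d : ℕ) : Qa n := (al n j - al n i) / (d : Qa n)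

lemma key_dc (n : ℕ) (i j : Fin n) (d : ℕ) (hd : d ≠ 0) :
    (d : Qa n) * cc n i j d = al n j - al n i :=
  mul_div_cancel₀ _ (by exact_mod_cast Nat.cast_ne_zero.2 hd)

lemma sub_al_ne (n : ℕ) {i j : Fin n} (hji : j ≠ i) : al n j - al n i ≠ 0 := by
  intro h0
  refine three_ne n i j i (-1) 1 0 j ?_ ?_
  · simp [hji]
  · push_cast; linear_combination h0

lemma cc_ne_zero (n : ℕ) {i j : Fin n} (hji : j ≠ i) {d : ℕ} (hd : d ≠ 0) :
    cc n i j d ≠ 0 := by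
  intro h0
  apply sub_al_ne n hji
  rw [← key_dc n i j d hd, h0, mul_zero]

/-- factors of the `frakC` denominator are nonzero -/
lemma fd_ne (n : ℕ) {i j : Fin n} (k : Fin n) (hji : j ≠ i) {d r : ℕ}
    (hr1 : 1 ≤ r) (hrd : r ≤ d) (hex : ¬(r = d ∧ k = j)) :
    al n i - al n k + (r : Qa n) * cc n i j d ≠ 0 := by
  have hd : d ≠ 0 := by omega
  have key := key_dc n i j d hd
  intro h0
  have h0' : (d : Qa n) * al n i - (d : Qa n) * al n k
      + (r : Qa n) * (al n j - al n i) = 0 := by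
    linear_combination (d : Qa n) * h0 - (r : Qa n) * key
  by_cases hki : k = i
  · subst hki
    refine three_ne n k j k ((d : ℚ) - r) r (-(d : ℚ)) j ?_ ?_
    · simp only [if_neg hji, if_pos rfl, if_neg hji]
      have : (1 : ℚ) ≤ r := by exact_mod_cast hr1
      norm_num; linarith
    · push_cast; linear_combination h0'
  · by_cases hkj : k = j
    · subst hkj
      have hrd' : r ≠ d := fun h => hex ⟨h, rfl⟩
      refine three_ne n i k k ((d : ℚ) - r) r (-(d : ℚ)) i ?_ ?_
      · have hik : i ≠ k := fun h => hji h.symm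
        simp only [if_pos rfl, if_neg hik]
        have : (r : ℚ) < d := by exact_mod_cast lt_of_le_of_ne hrd hrd'
        norm_num; intro h; exfalso; linarith
      · push_cast; linear_combination h0'
    · refine three_ne n i j k ((d : ℚ) - r) r (-(d : ℚ)) k ?_ ?_
      · simp only [if_neg hki, if_neg hkj, if_pos rfl]
        norm_num; simpa using hd
      · push_cast; linear_combination h0'

/-- factors of the evaluated `𝒴` denominator are nonzero -/
lemma vd_ne (n : ℕ) {i j : Fin n} (k : Fin n) (hji : j ≠ i) {d r : ℕ}
    (hd : d ≠ 0) (hr1 : 1 ≤ r) :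
    al n j - al n k + (r : Qa n) * cc n i j d ≠ 0 := by
  have key := key_dc n i j d hd
  intro h0
  have h0' : -(r : Qa n) * al n i + ((d : Qa n) + r) * al n j
      - (d : Qa n) * al n k = 0 := by
    linear_combination (d : Qa n) * h0 - (r : Qa n) * key
  have hr' : (1:ℚ) ≤ r := by exact_mod_cast hr1
  have hd' : (1:ℚ) ≤ d := by exact_mod_cast Nat.one_le_iff_ne_zero.2 hd
  by_cases hki : k = i
  · subst hki
    refine three_ne n k j k (-(r:ℚ)) ((d:ℚ)+r) (-(d:ℚ)) j ?_ ?_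
    · simp only [if_neg hji, if_pos rfl]; norm_num; linarith
    · push_cast; linear_combination h0'
  · by_cases hkj : k = j
    · subst hkj
      refine three_ne n i k k (-(r:ℚ)) ((d:ℚ)+r) (-(d:ℚ)) k ?_ ?_
      · have hki' : k ≠ i := hji
        simp only [if_neg hki', if_pos rfl]; norm_num; linarith
      · push_cast; linear_combination h0'
    · refine three_ne n i j k (-(r:ℚ)) ((d:ℚ)+r) (-(d:ℚ)) k ?_ ?_
      · simp only [if_neg hki, if_neg hkj, if_pos rfl]; norm_num; simpa using hd
      · push_cast; linear_combination h0'

/-- distinctness of pole locations -/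
lemma cc_inj (n : ℕ) {i j j' : Fin n} (hji : j ≠ i) (hji' : j' ≠ i) {d d' : ℕ}
    (hd : d ≠ 0) (hd' : d' ≠ 0) (h : cc n i j d = cc n i j' d') : d = d' ∧ j = j' := by
  have key := key_dc n i j d hd
  have key' := key_dc n i j' d' hd'
  have hdd : (d' : Qa n) * (al n j - al n i) = (d : Qa n) * (al n j' - al n i) := by
    calc (d' : Qa n) * (al n j - al n i) = (d' : Qa n) * ((d : Qa n) * cc n i j d) := by rw [key]
    _ = (d : Qa n) * ((d' : Qa n) * cc n i j' d') := by rw [h]; ring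
    _ = (d : Qa n) * (al n j' - al n i) := by rw [key']
  have hjj : j = j' := by
    by_contra hne
    refine three_ne n i j j' ((d:ℚ) - d') (d':ℚ) (-(d:ℚ)) j ?_ ?_
    · simp only [if_neg hji, if_pos rfl, if_neg hne]
      norm_num; simpa using hd'
    · push_cast; linear_combination hdd
  subst hjj
  refine ⟨?_, rfl⟩
  by_contra hne
  have hne' : (d':ℚ) - d ≠ 0 := by
    intro h0; apply hne; exact_mod_cast (sub_eq_zero.mp h0).symm
  refine three_ne n i j j ((d:ℚ) - d') (d':ℚ) (-(d:ℚ)) j ?_ ?_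
  · simp only [if_neg hji, if_pos rfl]; norm_num; intro h'; exfalso; apply hne'; linarith
  · push_cast; linear_combination hdd

/-! ### Polynomial representation of `Ynl` -/

def Npoly (n l : ℕ) (a : Fin l → ℕ) (x : Qa n) (d : ℕ) : Polynomial (Qa n) :=
  ∏ k, ∏ r ∈ range (a k * d),
    (Polynomial.C ((a k : Qa n) * x) + (r : Polynomial (Qa n)) * Polynomial.X)

def Dpoly (n : ℕ) (x : Qa n) (d : ℕ) : Polynomial (Qa n) :=
  ∏ r ∈ range d, ∏ k,
    (Polynomial.C (x - al n k) + ((r : Polynomial (Qa n)) + 1) * Polynomial.X)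

lemma Ynl_eq (n l : ℕ) (a : Fin l → ℕ) (x : Qa n) (d : ℕ) :
    Ynl n l a x d = algebraMap (Polynomial (Qa n)) (RatFunc (Qa n)) (Npoly n l a x d)
      / algebraMap (Polynomial (Qa n)) (RatFunc (Qa n)) (Dpoly n x d) := by
  simp [Ynl, Npoly, Dpoly, map_prod, map_add, map_mul, map_natCast,
    RatFunc.algebraMap_C, RatFunc.algebraMap_X]

lemma Dpoly_ne_zero (n : ℕ) (x : Qa n) (d : ℕ) : Dpoly n x d ≠ 0 := by
  apply Finset.prod_ne_zero_iff.2
  intro r _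
  apply Finset.prod_ne_zero_iff.2
  intro k _
  intro h0
  have e0 := congrArg (Polynomial.eval 0) h0
  have e1 := congrArg (Polynomial.eval 1) h0
  simp only [Polynomial.eval_add, Polynomial.eval_mul, Polynomial.eval_C, Polynomial.eval_X,
    Polynomial.eval_zero, Polynomial.eval_natCast, Polynomial.eval_one, mul_zero, mul_one,
    add_zero] at e0 e1
  rw [e0] at e1
  simp only [zero_add] at e1
  exact (Nat.cast_add_one_ne_zero (R := Qa n) r) (by exact_mod_cast e1)

lemma eval_Dpoly (n : ℕ) (x : Qa n) (d : ℕ) (c : Qa n) :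
    (Dpoly n x d).eval c = ∏ r ∈ range d, ∏ k, (x - al n k + ((r : Qa n) + 1) * c) := by
  simp [Dpoly, Polynomial.eval_prod]

lemma eval_Npoly (n l : ℕ) (a : Fin l → ℕ) (x : Qa n) (d : ℕ) (c : Qa n) :
    (Npoly n l a x d).eval c
      = ∏ k, ∏ r ∈ range (a k * d), ((a k : Qa n) * x + (r : Qa n) * c) := by
  simp [Npoly, Polynomial.eval_prod]

lemma eval_div_poly {K : Type*} [Field K] (N D : Polynomial K) (c : K) (hD : D.eval c ≠ 0) :
    RatFunc.eval (RingHom.id K) c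
        (algebraMap (Polynomial K) (RatFunc K) N / algebraMap (Polynomial K) (RatFunc K) D)
      = N.eval c / D.eval c := by
  have hD0 : D ≠ 0 := fun h => hD (by simp [h])
  have hx : Polynomial.eval₂ (RingHom.id K) c
      (RatFunc.denom (algebraMap (Polynomial K) (RatFunc K) N
        / algebraMap (Polynomial K) (RatFunc K) D)) ≠ 0 := by
    intro h0
    exact hD (by
      have := Polynomial.eval₂_eq_zero_of_dvd_of_eval₂_eq_zero (RingHom.id K) c
        (RatFunc.denom_div_dvd N D) h0
      simpa using this)
  have hy : Polynomial.eval₂ (RingHom.id K) c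
      (RatFunc.denom (algebraMap (Polynomial K) (RatFunc K) D)) ≠ 0 := by
    rw [RatFunc.denom_algebraMap]; simp
  have key := RatFunc.eval_mul (f := RingHom.id K) (a := c) hx hy
  rw [div_mul_cancel₀] at key
  · rw [RatFunc.eval_algebraMap, RatFunc.eval_algebraMap] at key
    simp only [Algebra.algebraMap_self, RingHom.id_apply] at key
    rw [show Polynomial.eval₂ (RingHom.id K) c N = N.eval c from rfl,
      show Polynomial.eval₂ (RingHom.id K) c D = D.eval c from rfl] at key
    rw [eq_div_iff hD]
    exact key.symm
  · simpa using hD0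

lemma prod_Icc_one {M : Type*} [CommMonoid M] (d : ℕ) (f : ℕ → M) :
    ∏ r ∈ Icc 1 d, f r = ∏ r ∈ range d, f (1 + r) := by
  rw [← Finset.Ico_add_one_right_eq_Icc, Finset.prod_Ico_eq_prod_range]
  simp

/-! ### The linear factors of the denominator -/

def Fd (n : ℕ) (i : Fin n) (p : ℕ × Fin n) : Polynomial (Qa n) :=
  Polynomial.C (al n i - al n p.2) + ((p.1 : Polynomial (Qa n)) + 1) * Polynomial.X

lemma Dpoly_eq_prodT (n : ℕ) (i : Fin n) (dstar : ℕ) :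
    Dpoly n (al n i) dstar = ∏ p ∈ (range dstar) ×ˢ (univ : Finset (Fin n)), Fd n i p := by
  rw [Dpoly, ← Finset.prod_product']
  exact Finset.prod_congr rfl fun p _ => rfl

lemma Fd_eq (n : ℕ) (i j : Fin n) (d : ℕ) (hd : 1 ≤ d) :
    Fd n i (d - 1, j)
      = Polynomial.C (d : Qa n) * (Polynomial.X - Polynomial.C (cc n i j d)) := by
  have h2 : (((d - 1 : ℕ)) : Polynomial (Qa n)) + 1 = Polynomial.C (d : Qa n) := by
    rw [Polynomial.C_eq_natCast]
    have : (d - 1) + 1 = d := by omega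
    exact_mod_cast congrArg (Nat.cast : ℕ → Polynomial (Qa n)) this
  show Polynomial.C (al n i - al n j) + (((d - 1 : ℕ) : Polynomial (Qa n)) + 1) * Polynomial.X = _
  rw [h2, mul_sub, ← Polynomial.C_mul, key_dc n i j d (by omega), map_sub, map_sub]
  ring

lemma Npoly_split (n l : ℕ) (a : Fin l → ℕ) (i j : Fin n) (d dstar : ℕ)
    (hd1 : 1 ≤ d) (hdd : d ≤ dstar) :
    (Npoly n l a (al n i) dstar).eval (cc n i j d)
      = (Npoly n l a (al n i) d).eval (cc n i j d)
        * (Npoly n l a (al n j) (dstar - d)).eval (cc n i j d) := by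
  have key := key_dc n i j d (by omega)
  simp only [eval_Npoly]
  rw [← Finset.prod_mul_distrib]
  refine Finset.prod_congr rfl fun k _ => ?_
  have h' : d + (dstar - d) = dstar := by omega
  have hsplit : a k * dstar = a k * d + a k * (dstar - d) := by
    rw [← Nat.mul_add, h']
  rw [hsplit, Finset.prod_range_add]
  congr 1
  refine Finset.prod_congr rfl fun s _ => ?_
  push_cast
  linear_combination (a k : Qa n) * key

lemma Drest_eval (n : ℕ) (i j : Fin n) (d dstar : ℕ) (hd1 : 1 ≤ d) (hdd : d ≤ dstar) :
    ∏ p ∈ (((range dstar) ×ˢ (univ : Finset (Fin n))).erase (d - 1, j)),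
        (Fd n i p).eval (cc n i j d)
      = (∏ r ∈ Icc 1 d, ∏ k ∈ univ.filter (fun k => ¬(r = d ∧ k = j)),
          (al n i - al n k + (r : Qa n) * cc n i j d))
        * (Dpoly n (al n j) (dstar - d)).eval (cc n i j d) := by
  set c := cc n i j d with hc
  have key := key_dc n i j d (by omega)
  have hFd : ∀ p : ℕ × Fin n, (Fd n i p).eval c
      = al n i - al n p.2 + ((p.1 : Qa n) + 1) * c := by
    intro p; simp [Fd]
  set H : ℕ × Fin n → Qa n :=
    fun p => if p = (d - 1, j) then 1 else al n i - al n p.2 + ((p.1 : Qa n) + 1) * c with hH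
  have step1 : ∏ p ∈ (((range dstar) ×ˢ (univ : Finset (Fin n))).erase (d - 1, j)),
      (Fd n i p).eval c
      = ∏ p ∈ (((range dstar) ×ˢ (univ : Finset (Fin n))).erase (d - 1, j)), H p := by
    refine Finset.prod_congr rfl fun p hp => ?_
    rw [hFd, hH]
    simp only [if_neg (Finset.ne_of_mem_erase hp)]
  have step2 : ∏ p ∈ (((range dstar) ×ˢ (univ : Finset (Fin n))).erase (d - 1, j)), H p
      = ∏ p ∈ (range dstar) ×ˢ (univ : Finset (Fin n)), H p :=
    Finset.prod_erase _ (by simp [hH])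
  rw [step1, step2, Finset.prod_product]
  have hds : dstar = d + (dstar - d) := by omega
  conv_lhs => rw [hds]
  rw [Finset.prod_range_add]
  congr 1
  · -- rows 1..d
    rw [prod_Icc_one d (fun r => ∏ k ∈ univ.filter (fun k => ¬(r = d ∧ k = j)),
      (al n i - al n k + (r : Qa n) * c))]
    refine Finset.prod_congr rfl fun r hr => ?_
    have hr' : r < d := mem_range.mp hr
    rw [Finset.prod_filter]
    refine Finset.prod_congr rfl fun k _ => ?_
    simp only [hH]
    by_cases h1 : (r, k) = (d - 1, j)
    · rw [if_pos h1, if_neg]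
      rw [Prod.mk.injEq] at h1
      push_neg
      exact ⟨by omega, h1.2⟩
    · rw [if_neg h1, if_pos]
      · push_cast; ring
      · rintro ⟨h2, h3⟩
        exact h1 (by rw [Prod.mk.injEq]; exact ⟨by omega, h3⟩)
  · -- rows d+1 .. dstar
    rw [eval_Dpoly]
    refine Finset.prod_congr rfl fun s _ => Finset.prod_congr rfl fun k _ => ?_
    simp only [hH]
    rw [if_neg (by simp only [Prod.mk.injEq, not_and]; intro h2; omega)]
    push_cast
    linear_combination key

/-! ### Full factorization of the denominator -/

def Epoly (n : ℕ) (i : Fin n) (dstar : ℕ) : Polynomial (Qa n) :=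
  ∏ p ∈ (Icc 1 dstar) ×ˢ ((univ : Finset (Fin n)).erase i),
    (Polynomial.X - Polynomial.C (cc n i p.2 p.1))

def u1 (n : ℕ) (dstar : ℕ) : Qa n := ∏ r ∈ range dstar, ((r : Qa n) + 1)

def u2 (n : ℕ) (i : Fin n) (dstar : ℕ) : Qa n :=
  ∏ r ∈ range dstar, ∏ _k ∈ (univ : Finset (Fin n)).erase i, ((r : Qa n) + 1)

lemma u1_ne (n : ℕ) (dstar : ℕ) : u1 n dstar ≠ 0 :=
  Finset.prod_ne_zero_iff.2 fun r _ => Nat.cast_add_one_ne_zero r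

lemma u2_ne (n : ℕ) (i : Fin n) (dstar : ℕ) : u2 n i dstar ≠ 0 :=
  Finset.prod_ne_zero_iff.2 fun r _ =>
    Finset.prod_ne_zero_iff.2 fun k _ => Nat.cast_add_one_ne_zero r

lemma Epoly_ne (n : ℕ) (i : Fin n) (dstar : ℕ) : Epoly n i dstar ≠ 0 :=
  Finset.prod_ne_zero_iff.2 fun p _ => Polynomial.X_sub_C_ne_zero _

lemma Dfact (n : ℕ) (i : Fin n) (dstar : ℕ) :
    Dpoly n (al n i) dstar
      = Polynomial.C (u1 n dstar) * Polynomial.X ^ dstar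
        * (Polynomial.C (u2 n i dstar) * Epoly n i dstar) := by
  rw [Dpoly]
  have row : ∀ r ∈ range dstar,
      (∏ k, (Polynomial.C (al n i - al n k)
          + ((r : Polynomial (Qa n)) + 1) * Polynomial.X))
      = (((r : Polynomial (Qa n)) + 1) * Polynomial.X)
        * ∏ k ∈ univ.erase i,
            (Polynomial.C ((r : Qa n) + 1)
              * (Polynomial.X - Polynomial.C (cc n i k (r + 1)))) := by
    intro r _
    rw [← Finset.mul_prod_erase univ _ (mem_univ i)]
    congr 1
    · simp
    · refine Finset.prod_congr rfl fun k hk => ?_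
      have h := Fd_eq n i k (r + 1) (by omega)
      simp only [Nat.add_sub_cancel] at h
      rw [show (Polynomial.C (al n i - al n k) + ((r : Polynomial (Qa n)) + 1) * Polynomial.X)
        = Fd n i (r, k) from rfl, h]
      norm_cast
  rw [Finset.prod_congr rfl row, Finset.prod_mul_distrib]
  congr 1
  · rw [Finset.prod_mul_distrib, Finset.prod_const, Finset.card_range]
    congr 1
    rw [u1, map_prod]
    refine Finset.prod_congr rfl fun r _ => ?_
    rw [map_add, map_one, Polynomial.C_eq_natCast]
  · rw [show (∏ r ∈ range dstar, ∏ k ∈ univ.erase i,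
        (Polynomial.C ((r : Qa n) + 1) * (Polynomial.X - Polynomial.C (cc n i k (r + 1)))))
      = (∏ r ∈ range dstar, ∏ k ∈ univ.erase i, Polynomial.C ((r : Qa n) + 1))
        * ∏ r ∈ range dstar, ∏ k ∈ univ.erase i,
            (Polynomial.X - Polynomial.C (cc n i k (r + 1))) from by
      rw [← Finset.prod_mul_distrib]
      exact Finset.prod_congr rfl fun r _ => by rw [← Finset.prod_mul_distrib]]
    congr 1
    · rw [u2, map_prod]
      exact Finset.prod_congr rfl fun r _ => by rw [map_prod]
    · rw [Epoly, Finset.prod_product,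
        prod_Icc_one dstar (fun d => ∏ j ∈ univ.erase i,
          (Polynomial.X - Polynomial.C (cc n i j d)))]
      refine Finset.prod_congr rfl fun r _ => Finset.prod_congr rfl fun k _ => ?_
      rw [Nat.add_comm 1 r]

/-! ### The main theorem -/

/-- the hypergeometric series `𝒴_{-l}` is `𝔠`-recursive; i.e. for every
`i` and `d* ≥ 1`, the `q^{d*}`-coefficient of `𝒴_{-l}(α_i, ℏ, q)` minus
`Σ_{d=1}^{d*} Σ_{j≠i} 𝔠^j_i(d)/(ℏ - (α_j-α_i)/d)` times the value at `ℏ' = (α_j-α_i)/d`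
of the `q^{d*-d}`-coefficient of `𝒴_{-l}(α_j, ℏ', q)` is a Laurent polynomial in `ℏ`. -/
theorem stmt4 (n l : ℕ) (hn : 2 ≤ n) (a : Fin l → ℕ) (ha : ∀ k, 0 < a k)
    (i : Fin n) (dstar : ℕ) (hd : 1 ≤ dstar) :
    ∃ (p : Polynomial (Qa n)) (N : ℕ),
      (Ynl n l a (al n i) dstar
          - ∑ d ∈ Icc 1 dstar, ∑ j ∈ univ.erase i,
              RatFunc.C (frakC n l a i j d) /
                  (RatFunc.X - RatFunc.C ((al n j - al n i) / (d : Qa n))) *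
                RatFunc.C (RatFunc.eval (RingHom.id (Qa n))
                  ((al n j - al n i) / (d : Qa n)) (Ynl n l a (al n j) (dstar - d))))
        * RatFunc.X ^ N
      = algebraMap (Polynomial (Qa n)) (RatFunc (Qa n)) p := by
  classical
  set S : Finset (ℕ × Fin n) := (Icc 1 dstar) ×ˢ ((univ : Finset (Fin n)).erase i) with hS
  have hmemS : ∀ p ∈ S, 1 ≤ p.1 ∧ p.1 ≤ dstar ∧ p.2 ≠ i := by
    intro p hp
    rw [hS, Finset.mem_product, Finset.mem_Icc, Finset.mem_erase] at hp
    exact ⟨hp.1.1, hp.1.2, hp.2.1⟩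
  set val : ℕ × Fin n → Qa n := fun p =>
    RatFunc.eval (RingHom.id (Qa n)) (cc n i p.2 p.1) (Ynl n l a (al n p.2) (dstar - p.1))
    with hval
  set Drest : ℕ × Fin n → Polynomial (Qa n) := fun p =>
    ∏ q ∈ (((range dstar) ×ˢ (univ : Finset (Fin n))).erase (p.1 - 1, p.2)), Fd n i q
    with hDrest
  set Qp : Polynomial (Qa n) :=
    Npoly n l a (al n i) dstar
      - ∑ p ∈ S, Polynomial.C (frakC n l a i p.2 p.1 * val p * (p.1 : Qa n)) * Drest p
    with hQp
  have hADne : algebraMap (Polynomial (Qa n)) (RatFunc (Qa n)) (Dpoly n (al n i) dstar) ≠ 0 :=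
    RatFunc.algebraMap_ne_zero (Dpoly_ne_zero n _ dstar)
  -- Step: clearing the denominator
  have hsplitD : ∀ p ∈ S, Dpoly n (al n i) dstar = Fd n i (p.1 - 1, p.2) * Drest p := by
    intro p hp
    obtain ⟨h1, h2, h3⟩ := hmemS p hp
    rw [Dpoly_eq_prodT, hDrest]
    exact (Finset.mul_prod_erase _ _ (by
      rw [Finset.mem_product]
      exact ⟨mem_range.mpr (by omega), mem_univ _⟩)).symm
  have step3 :
      (Ynl n l a (al n i) dstar - ∑ p ∈ S,
          RatFunc.C (frakC n l a i p.2 p.1) /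
              (RatFunc.X - RatFunc.C (cc n i p.2 p.1)) * RatFunc.C (val p))
        * algebraMap (Polynomial (Qa n)) (RatFunc (Qa n)) (Dpoly n (al n i) dstar)
      = algebraMap (Polynomial (Qa n)) (RatFunc (Qa n)) Qp := by
    rw [sub_mul, Finset.sum_mul, hQp, map_sub, map_sum]
    congr 1
    · rw [Ynl_eq, div_mul_cancel₀ _ hADne]
    · refine Finset.sum_congr rfl fun p hp => ?_
      obtain ⟨h1, h2, h3⟩ := hmemS p hp
      have hXc : (RatFunc.X - RatFunc.C (cc n i p.2 p.1) : RatFunc (Qa n)) ≠ 0 := by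
        rw [← RatFunc.algebraMap_X, ← RatFunc.algebraMap_C, ← map_sub]
        exact RatFunc.algebraMap_ne_zero (Polynomial.X_sub_C_ne_zero _)
      rw [hsplitD p hp, map_mul, Fd_eq n i p.2 p.1 h1, map_mul, map_sub,
        RatFunc.algebraMap_C, RatFunc.algebraMap_X, RatFunc.algebraMap_C,
        map_mul, map_mul, map_mul]
      field_simp
      simp only [RatFunc.algebraMap_C, map_mul]
      ring
  -- Step: the roots
  have step4 : ∀ p ∈ S, Qp.eval (cc n i p.2 p.1) = 0 := by
    rintro ⟨d, j⟩ hp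
    obtain ⟨h1, h2, h3⟩ := hmemS _ hp
    simp only at h1 h2 h3
    have key := key_dc n i j d (by omega)
    rw [hQp, Polynomial.eval_sub, Polynomial.eval_finset_sum]
    have hzero : ∀ p' ∈ S, p' ≠ (d, j) →
        (Polynomial.C (frakC n l a i p'.2 p'.1 * val p' * (p'.1 : Qa n)) * Drest p').eval
          (cc n i j d) = 0 := by
      intro p' hp' hne
      obtain ⟨h1', h2', h3'⟩ := hmemS p' hp'
      rw [Polynomial.eval_mul, hDrest]
      simp only
      rw [Polynomial.eval_prod]
      have hmem : (d - 1, j) ∈ (((range dstar) ×ˢ (univ : Finset (Fin n))).erase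
          (p'.1 - 1, p'.2)) := by
        rw [Finset.mem_erase]
        constructor
        · intro hcon
          have hfst := congrArg Prod.fst hcon
          have hsnd := congrArg Prod.snd hcon
          simp only at hfst hsnd
          apply hne
          rw [Prod.ext_iff]
          exact ⟨by omega, hsnd.symm⟩
        · rw [Finset.mem_product]
          exact ⟨mem_range.mpr (by omega), mem_univ _⟩
      rw [Finset.prod_eq_zero hmem (by
        show (Fd n i (d - 1, j)).eval (cc n i j d) = 0
        rw [Fd_eq n i j d h1]
        simp)]
      ring
    rw [Finset.sum_eq_single_of_mem (d, j) hp hzero]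
    simp only
    have hDrest_eval : (Drest (d, j)).eval (cc n i j d)
        = (∏ r ∈ Icc 1 d, ∏ k ∈ univ.filter (fun k => ¬(r = d ∧ k = j)),
            (al n i - al n k + (r : Qa n) * cc n i j d))
          * (Dpoly n (al n j) (dstar - d)).eval (cc n i j d) := by
      rw [hDrest]
      simp only
      rw [Polynomial.eval_prod]
      exact Drest_eval n i j d dstar h1 h2
    have hFDne : (∏ r ∈ Icc 1 d, ∏ k ∈ univ.filter (fun k => ¬(r = d ∧ k = j)),
        (al n i - al n k + (r : Qa n) * cc n i j d)) ≠ 0 := by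
      refine Finset.prod_ne_zero_iff.2 fun r hr => Finset.prod_ne_zero_iff.2 fun k hk => ?_
      rw [Finset.mem_Icc] at hr
      rw [Finset.mem_filter] at hk
      exact fd_ne n k h3 hr.1 hr.2 hk.2
    have hVDne : (Dpoly n (al n j) (dstar - d)).eval (cc n i j d) ≠ 0 := by
      rw [eval_Dpoly]
      refine Finset.prod_ne_zero_iff.2 fun r _ => Finset.prod_ne_zero_iff.2 fun k _ => ?_
      have := vd_ne n k h3 (d := d) (r := r + 1) (by omega) (by omega)
      push_cast at this
      exact this
    have hfrak : frakC n l a i j d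
        = (Npoly n l a (al n i) d).eval (cc n i j d)
          / ((d : Qa n) * ∏ r ∈ Icc 1 d, ∏ k ∈ univ.filter (fun k => ¬(r = d ∧ k = j)),
              (al n i - al n k + (r : Qa n) * cc n i j d)) := by
      rw [frakC, eval_Npoly]
      rfl
    have hval : val (d, j)
        = (Npoly n l a (al n j) (dstar - d)).eval (cc n i j d)
          / (Dpoly n (al n j) (dstar - d)).eval (cc n i j d) := by
      rw [hval]
      simp only
      rw [Ynl_eq]
      exact eval_div_poly _ _ _ hVDne
    rw [Polynomial.eval_mul, Polynomial.eval_C, hDrest_eval, hfrak, hval,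
      Npoly_split n l a i j d dstar h1 h2]
    have hdne : (d : Qa n) ≠ 0 := Nat.cast_ne_zero.2 (by omega)
    set FNv := (Npoly n l a (al n i) d).eval (cc n i j d) with hFNv
    set VNv := (Npoly n l a (al n j) (dstar - d)).eval (cc n i j d) with hVNv
    set VDv := (Dpoly n (al n j) (dstar - d)).eval (cc n i j d) with hVDv
    set FDv := (∏ r ∈ Icc 1 d, ∏ k ∈ univ.filter (fun k => ¬(r = d ∧ k = j)),
      (al n i - al n k + (r : Qa n) * cc n i j d)) with hFDv
    have hclear : FNv / ((d : Qa n) * FDv) * (VNv / VDv) * (d : Qa n) * (FDv * VDv)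
        = FNv * VNv := by
      field_simp
      try ring
    rw [hclear, sub_self]
  -- Step: divisibility
  have hpair : (↑S : Set (ℕ × Fin n)).Pairwise
      (Function.onFun IsCoprime fun p : ℕ × Fin n =>
        (Polynomial.X - Polynomial.C (cc n i p.2 p.1) : Polynomial (Qa n))) := by
    intro p hp p' hp' hne
    simp only [Function.onFun]
    obtain ⟨h1, h2, h3⟩ := hmemS p (by exact_mod_cast hp)
    obtain ⟨h1', h2', h3'⟩ := hmemS p' (by exact_mod_cast hp')
    apply Polynomial.isCoprime_X_sub_C_of_isUnit_sub
    refine (sub_ne_zero.2 ?_).isUnit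
    intro hcc
    obtain ⟨hd', hj'⟩ := cc_inj n h3 h3' (by omega) (by omega) hcc
    exact hne (Prod.ext hd' hj')
  have hdvd : ∀ p ∈ S, (Polynomial.X - Polynomial.C (cc n i p.2 p.1) : Polynomial (Qa n)) ∣ Qp :=
    fun p hp => Polynomial.dvd_iff_isRoot.2 (step4 p hp)
  obtain ⟨P, hP⟩ := Finset.prod_dvd_of_coprime hpair hdvd
  have hE : (∏ p ∈ S, (Polynomial.X - Polynomial.C (cc n i p.2 p.1) : Polynomial (Qa n)))
      = Epoly n i dstar := by rw [Epoly, hS]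
  rw [hE] at hP
  -- Final assembly
  refine ⟨Polynomial.C ((u1 n dstar * u2 n i dstar)⁻¹) * P, dstar, ?_⟩
  have hsum : (∑ d ∈ Icc 1 dstar, ∑ j ∈ univ.erase i,
        RatFunc.C (frakC n l a i j d) /
            (RatFunc.X - RatFunc.C ((al n j - al n i) / (d : Qa n))) *
          RatFunc.C (RatFunc.eval (RingHom.id (Qa n))
            ((al n j - al n i) / (d : Qa n)) (Ynl n l a (al n j) (dstar - d))))
      = ∑ p ∈ S, RatFunc.C (frakC n l a i p.2 p.1) /
            (RatFunc.X - RatFunc.C (cc n i p.2 p.1)) * RatFunc.C (val p) := by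
    rw [hS, Finset.sum_product]
    simp only [hval, cc]
  rw [hsum]
  have hdiff : (Ynl n l a (al n i) dstar - ∑ p ∈ S,
        RatFunc.C (frakC n l a i p.2 p.1) /
            (RatFunc.X - RatFunc.C (cc n i p.2 p.1)) * RatFunc.C (val p))
      = algebraMap (Polynomial (Qa n)) (RatFunc (Qa n)) Qp
        / algebraMap (Polynomial (Qa n)) (RatFunc (Qa n)) (Dpoly n (al n i) dstar) := by
    rw [eq_div_iff hADne]
    exact step3
  rw [hdiff, hP, Dfact n i dstar]
  have hEne : algebraMap (Polynomial (Qa n)) (RatFunc (Qa n)) (Epoly n i dstar) ≠ 0 :=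
    RatFunc.algebraMap_ne_zero (Epoly_ne n i dstar)
  have hu1 : (RatFunc.C (u1 n dstar) : RatFunc (Qa n)) ≠ 0 := by
    rw [← RatFunc.algebraMap_C]
    exact RatFunc.algebraMap_ne_zero (Polynomial.C_ne_zero.2 (u1_ne n dstar))
  have hu2 : (RatFunc.C (u2 n i dstar) : RatFunc (Qa n)) ≠ 0 := by
    rw [← RatFunc.algebraMap_C]
    exact RatFunc.algebraMap_ne_zero (Polynomial.C_ne_zero.2 (u2_ne n i dstar))
  have hX : (RatFunc.X : RatFunc (Qa n)) ≠ 0 := RatFunc.X_ne_zero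
  rw [map_mul, map_mul, map_mul, map_mul, map_mul, map_pow,
    RatFunc.algebraMap_C, RatFunc.algebraMap_C, RatFunc.algebraMap_C, RatFunc.algebraMap_X]
  rw [map_inv₀, map_mul]
  field_simp

end Stmt4
end
end

section
/- Define Φ(ℏ,z,q) = Σ_{i=1}^n (e^{α_i z}/∏_{k≠i}(α_i−α_k)) 𝒴(α_i, ℏ, q e^{ℏz}) 𝒴_{−l}(α_i, −ℏ, q), a formal power series in z and q whose coefficients are rational functions of ℏ. Then every coefficient of z^a q^b in Φ is a polynomial in ℏ with coefficients in ℚ_α; that is, Φ ∈ ℚ_α[ℏ][[z,q]]. (In other words, the pair (𝒴, 𝒴_{−l}) satisfies the mutual polynomiality condition.) -/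
open Finset

noncomputable section

namespace Stmt5

/-- `ℚ_α = ℚ(α_1,…,α_n)`, the field of rational functions in the indeterminates `α_i`. -/
abbrev Qa (n : ℕ) := FractionRing (MvPolynomial (Fin n) ℚ)

/-- The indeterminates `α_i` as elements of `ℚ_α`. -/
def al (n : ℕ) (i : Fin n) : Qa n := algebraMap (MvPolynomial (Fin n) ℚ) (Qa n) (MvPolynomial.X i)

/-- The `q^d`-coefficient of `𝒴(x, ℏ, q)` as a rational function of `ℏ` (the `RatFunc`
variable) over `ℚ_α`. -/
def Ycal (n l : ℕ) (a : Fin l → ℕ) (x : Qa n) (d : ℕ) : RatFunc (Qa n) :=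
  (∏ k, ∏ r ∈ range (a k * d),
      (RatFunc.C ((a k : Qa n) * x) + ((r : RatFunc (Qa n)) + 1) * RatFunc.X)) /
    ∏ r ∈ range d, ∏ k,
      (RatFunc.C (x - al n k) + ((r : RatFunc (Qa n)) + 1) * RatFunc.X)

/-- The `q^d`-coefficient of `𝒴_{-l}(x, -ℏ, q)`, i.e. of `𝒴_{-l}` with `ℏ` replaced
by `-ℏ`. -/
def YnlNeg (n l : ℕ) (a : Fin l → ℕ) (x : Qa n) (d : ℕ) : RatFunc (Qa n) :=
  (∏ k, ∏ r ∈ range (a k * d),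
      (RatFunc.C ((a k : Qa n) * x) + (r : RatFunc (Qa n)) * (-RatFunc.X))) /
    ∏ r ∈ range d, ∏ k,
      (RatFunc.C (x - al n k) + ((r : RatFunc (Qa n)) + 1) * (-RatFunc.X))

/-! ### Auxiliary setup

The key observation: substituting `y = x + d₁ℏ`, each summand of the statement becomes the
residue of the single fixed rational function
`Ψ(y) = (y^A/A!) ∏_k ∏_{r<a_k b} (a_k y - r ℏ) / ∏_{r≤b} ∏_j (y - α_j - r ℏ)`
at the node `y = α_i + d₁ ℏ`.  The sum of all residues of `Ψ` equals a coefficient of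
`N mod D` where `N`, `D` are polynomials in `y` over `ℚ_α[ℏ]` with `D` monic, hence is a
polynomial in `ℏ`. -/

set_option maxHeartbeats 2000000
set_option synthInstance.maxHeartbeats 1000000

open Polynomial

instance (n : ℕ) : CharZero (Qa n) :=
  charZero_of_injective_algebraMap (IsFractionRing.injective (MvPolynomial (Fin n) ℚ) (Qa n))

instance (n : ℕ) : CharZero (RatFunc (Qa n)) :=
  charZero_of_injective_algebraMap (RatFunc.algebraMap_injective (Qa n))

lemma al_injective (n : ℕ) : Function.Injective (al n) := fun _ _ h =>
  MvPolynomial.X_injective (IsFractionRing.injective (MvPolynomial (Fin n) ℚ) (Qa n) h)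

/-- The node `α_i + r ℏ` as a polynomial in `ℏ`. -/
def nodeP (n : ℕ) (t : Fin n × ℕ) : Polynomial (Qa n) :=
  Polynomial.C (al n t.1) + (t.2 : Polynomial (Qa n)) * Polynomial.X

/-- The node `α_i + r ℏ` as an element of `ℚ_α(ℏ)`. -/
def nodeF (n : ℕ) (t : Fin n × ℕ) : RatFunc (Qa n) :=
  RatFunc.C (al n t.1) + (t.2 : RatFunc (Qa n)) * RatFunc.X

/-- The index set of all nodes. -/
def nodes (n b : ℕ) : Finset (Fin n × ℕ) := Finset.univ ×ˢ Finset.range (b + 1)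

lemma algebraMap_nodeP (n : ℕ) (t : Fin n × ℕ) :
    algebraMap (Polynomial (Qa n)) (RatFunc (Qa n)) (nodeP n t) = nodeF n t := by
  rw [nodeP, nodeF, RingHom.map_add, RingHom.map_mul, map_natCast, RatFunc.algebraMap_C,
    RatFunc.algebraMap_X]

lemma nodeP_injective (n : ℕ) : Function.Injective (nodeP n) := by
  rintro ⟨i, r⟩ ⟨j, s⟩ h
  simp only [nodeP] at h
  have h0 := congrArg (fun p => Polynomial.coeff p 0) h
  have h1 := congrArg (fun p => Polynomial.coeff p 1) h
  simp only [Polynomial.coeff_add, Polynomial.coeff_C, Polynomial.coeff_natCast_mul,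
    Polynomial.coeff_X_zero, Polynomial.coeff_X_one, mul_zero, mul_one, add_zero, if_pos,
    if_neg one_ne_zero, zero_add] at h0 h1
  have hr : r = s := by exact_mod_cast h1
  have hi : i = j := al_injective n h0
  simp [hr, hi]

lemma nodeF_injective (n : ℕ) : Function.Injective (nodeF n) := by
  intro t t' h
  apply nodeP_injective n
  apply RatFunc.algebraMap_injective (Qa n)
  rw [algebraMap_nodeP, algebraMap_nodeP, h]

lemma nodes_card (n b : ℕ) : (nodes n b).card = n * (b + 1) := by
  simp [nodes]

/-- The denominator `D`, as a polynomial in `y` over `ℚ_α[ℏ]`. -/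
def D0 (n b : ℕ) : Polynomial (Polynomial (Qa n)) :=
  ∏ t ∈ nodes n b, (Polynomial.X - Polynomial.C (nodeP n t))

lemma D0_monic (n b : ℕ) : (D0 n b).Monic :=
  monic_prod_of_monic _ _ fun _ _ => monic_X_sub_C _

lemma D0_map (n b : ℕ) :
    (D0 n b).map (algebraMap (Polynomial (Qa n)) (RatFunc (Qa n))) =
      ∏ t ∈ nodes n b, (Polynomial.X - Polynomial.C (nodeF n t)) := by
  rw [D0, Polynomial.map_prod]
  exact Finset.prod_congr rfl fun t _ => by
    rw [Polynomial.map_sub, Polynomial.map_X, Polynomial.map_C, algebraMap_nodeP]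

/-- The numerator `N`, as a polynomial in `y` over `ℚ_α[ℏ]`. -/
def N0 (n l : ℕ) (a : Fin l → ℕ) (A b : ℕ) : Polynomial (Polynomial (Qa n)) :=
  Polynomial.C (Polynomial.C ((A.factorial : Qa n)⁻¹)) * Polynomial.X ^ A *
    ∏ k : Fin l, ∏ r ∈ Finset.range (a k * b),
      ((a k : Polynomial (Polynomial (Qa n))) * Polynomial.X -
        Polynomial.C ((r : Polynomial (Qa n)) * Polynomial.X))

lemma N0_map_eval (n l : ℕ) (a : Fin l → ℕ) (A b : ℕ) (c : RatFunc (Qa n)) :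
    (((N0 n l a A b).map (algebraMap (Polynomial (Qa n)) (RatFunc (Qa n)))).eval c) =
      RatFunc.C ((A.factorial : Qa n)⁻¹) * c ^ A *
        ∏ k : Fin l, ∏ r ∈ Finset.range (a k * b),
          ((a k : RatFunc (Qa n)) * c - (r : RatFunc (Qa n)) * RatFunc.X) := by
  rw [N0]
  simp only [Polynomial.map_mul, Polynomial.map_pow, Polynomial.map_C, Polynomial.map_X,
    Polynomial.map_prod, Polynomial.map_sub, Polynomial.map_natCast,
    Polynomial.eval_mul, Polynomial.eval_pow, Polynomial.eval_C, Polynomial.eval_X,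
    Polynomial.eval_prod, Polynomial.eval_sub, Polynomial.eval_natCast]
  rw [RatFunc.algebraMap_C]
  congr 1
  refine Finset.prod_congr rfl fun k _ => Finset.prod_congr rfl fun r _ => ?_
  rw [RingHom.map_mul, map_natCast, RatFunc.algebraMap_X]

section LagrangeAux

variable {F : Type*} [Field F] {ι : Type*} [DecidableEq ι]

lemma basis_coeff (s : Finset ι) (v : ι → F) (i : ι) (hi : i ∈ s) :
    (Lagrange.basis s v i).coeff (s.card - 1) = (∏ j ∈ s.erase i, (v i - v j))⁻¹ := by
  have h1 : Lagrange.basis s v i =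
      Polynomial.C (∏ j ∈ s.erase i, (v i - v j))⁻¹ *
        ∏ j ∈ s.erase i, (X - Polynomial.C (v j)) := by
    rw [Lagrange.basis, ← Finset.prod_inv_distrib, map_prod, ← Finset.prod_mul_distrib]
    exact Finset.prod_congr rfl fun j _ => rfl
  have hM : (∏ j ∈ s.erase i, (X - Polynomial.C (v j))).Monic :=
    monic_prod_of_monic _ _ fun _ _ => monic_X_sub_C _
  have hdeg : (∏ j ∈ s.erase i, (X - Polynomial.C (v j))).natDegree = s.card - 1 := by
    rw [natDegree_prod_of_monic _ _ fun _ _ => monic_X_sub_C _]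
    simp [Finset.card_erase_of_mem hi]
  rw [h1, coeff_C_mul, ← hdeg, hM.coeff_natDegree, mul_one]

/-- Summing the residues of `f(y)/∏_{t∈s}(y - v t)` over all nodes picks out the
coefficient of `y^(#s - 1)` in the remainder of `f` modulo the node polynomial. -/
lemma sum_eval_inv_prod (s : Finset ι) (v : ι → F) (hv : Set.InjOn v s)
    (f : F[X]) (hf : f.degree < s.card) :
    ∑ t ∈ s, f.eval (v t) * (∏ t' ∈ s.erase t, (v t - v t'))⁻¹ = f.coeff (s.card - 1) := by
  conv_rhs => rw [Lagrange.eq_interpolate hv hf]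
  rw [Lagrange.interpolate_apply, finset_sum_coeff]
  exact Finset.sum_congr rfl fun t ht => by rw [coeff_C_mul, basis_coeff s v t ht]

end LagrangeAux

lemma binom (n : ℕ) (x : Qa n) (d1 A : ℕ) :
    ∑ kk ∈ Finset.HasAntidiagonal.antidiagonal A, RatFunc.C (x ^ kk.1 / (kk.1.factorial : Qa n)) *
        (((d1 : RatFunc (Qa n)) * RatFunc.X) ^ kk.2 / (kk.2.factorial : RatFunc (Qa n))) =
      RatFunc.C ((A.factorial : Qa n)⁻¹) *
        (RatFunc.C x + (d1 : RatFunc (Qa n)) * RatFunc.X) ^ A := by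
  rw [Commute.add_pow' (Commute.all _ _), Finset.mul_sum]
  refine Finset.sum_congr rfl fun kk hkk => ?_
  have hA : kk.1 + kk.2 = A := Finset.HasAntidiagonal.mem_antidiagonal.mp hkk
  have h1 : kk.1 ≤ A := by omega
  have h2 : A - kk.1 = kk.2 := by omega
  have hf1 : ((kk.1.factorial : RatFunc (Qa n))) ≠ 0 :=
    Nat.cast_ne_zero.mpr kk.1.factorial_ne_zero
  have hf2 : ((kk.2.factorial : RatFunc (Qa n))) ≠ 0 :=
    Nat.cast_ne_zero.mpr kk.2.factorial_ne_zero
  have hfA : ((A.factorial : RatFunc (Qa n))) ≠ 0 :=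
    Nat.cast_ne_zero.mpr A.factorial_ne_zero
  rw [show RatFunc.C (x ^ kk.1 / (kk.1.factorial : Qa n)) =
      RatFunc.C x ^ kk.1 / (kk.1.factorial : RatFunc (Qa n)) by
        rw [map_div₀, map_pow, map_natCast],
    show RatFunc.C ((A.factorial : Qa n)⁻¹) = ((A.factorial : RatFunc (Qa n)))⁻¹ by
        rw [map_inv₀, map_natCast]]
  rw [nsmul_eq_mul, Nat.cast_choose (RatFunc (Qa n)) h1, h2]
  field_simp

/-- Reindexing the numerator factors: the factors of `∏_{r < m₁+m₂} (x + m₁ℏ - rℏ)` split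
into the numerator factors of `𝒴` (degree `m₁`) and of `𝒴_{-l}(-ℏ)` (degree `m₂`). -/
lemma num_split (n : ℕ) (x : Qa n) (m1 m2 : ℕ) :
    ∏ r ∈ Finset.range (m1 + m2),
        (RatFunc.C x + (m1 : RatFunc (Qa n)) * RatFunc.X - (r : RatFunc (Qa n)) * RatFunc.X) =
      (∏ r ∈ Finset.range m1,
        (RatFunc.C x + ((r : RatFunc (Qa n)) + 1) * RatFunc.X)) *
      ∏ r ∈ Finset.range m2,
        (RatFunc.C x + (r : RatFunc (Qa n)) * (-RatFunc.X)) := by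
  rw [Finset.prod_range_add]
  congr 1
  · rw [← Finset.prod_range_reflect
      (fun r => RatFunc.C x + ((r : RatFunc (Qa n)) + 1) * RatFunc.X) m1]
    refine Finset.prod_congr rfl fun r hr => ?_
    have hr' : r < m1 := Finset.mem_range.mp hr
    have : ((m1 - 1 - r : ℕ) : RatFunc (Qa n)) = (m1 : RatFunc (Qa n)) - 1 - r := by
      push_cast [Nat.cast_sub (by omega : 1 ≤ m1), Nat.cast_sub (by omega : r ≤ m1 - 1)]
      ring
    rw [this]; ring
  · refine Finset.prod_congr rfl fun r _ => ?_
    push_cast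
    ring

/-- Reindexing the denominator factors: the product of `(α_i + d₁ℏ) - (α_j + rℏ)` over all
nodes other than `(i, d₁)` splits into the denominator factors of `𝒴` at `q`-degree `d₁`,
those of `𝒴_{-l}(-ℏ)` at `q`-degree `b - d₁`, and the localization factor
`∏_{k≠i} (α_i - α_k)`. -/
lemma den_split (n b : ℕ) (i : Fin n) (d1 : ℕ) (hd1 : d1 ≤ b) :
    ∏ t' ∈ (nodes n b).erase (i, d1), (nodeF n (i, d1) - nodeF n t') =
      (∏ r ∈ Finset.range d1, ∏ k : Fin n,
          (RatFunc.C (al n i - al n k) + ((r : RatFunc (Qa n)) + 1) * RatFunc.X)) *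
      (∏ r ∈ Finset.range (b - d1), ∏ k : Fin n,
          (RatFunc.C (al n i - al n k) + ((r : RatFunc (Qa n)) + 1) * (-RatFunc.X))) *
      ∏ k ∈ Finset.univ.erase i, RatFunc.C (al n i - al n k) := by
  classical
  have hset : (nodes n b).erase (i, d1) =
      (Finset.univ ×ˢ ((Finset.range (b+1)).erase d1)) ∪
        ((Finset.univ.erase i) ×ˢ {d1}) := by
    ext ⟨j, r⟩
    simp only [nodes, Finset.mem_erase, Finset.mem_product, Finset.mem_union, Finset.mem_range,
      Finset.mem_univ, true_and, Finset.mem_singleton, Prod.mk.injEq, Ne, not_and, and_true]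
    constructor
    · rintro ⟨hne, hr⟩
      by_cases h : r = d1
      · subst h
        exact Or.inr ⟨fun hj => hne (by simp [hj]) rfl, rfl⟩
      · exact Or.inl ⟨h, hr⟩
    · rintro (⟨hrne, hr⟩ | ⟨hj, rfl⟩)
      · exact ⟨fun _ h => hrne h, hr⟩
      · exact ⟨fun hj' _ => hj hj', by omega⟩
  have hdisj : Disjoint (Finset.univ ×ˢ ((Finset.range (b+1)).erase d1))
      ((Finset.univ.erase i) ×ˢ ({d1} : Finset ℕ)) := by
    simp only [Finset.disjoint_left]
    rintro ⟨j, r⟩ h1 h2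
    simp only [Finset.mem_product, Finset.mem_erase, Finset.mem_singleton] at h1 h2
    exact h1.2.1 h2.2
  rw [hset, Finset.prod_union hdisj, Finset.prod_product, Finset.prod_product]
  have hE2 : (∏ j ∈ Finset.univ.erase i, ∏ r ∈ ({d1} : Finset ℕ),
      (nodeF n (i, d1) - nodeF n (j, r))) =
      ∏ k ∈ Finset.univ.erase i, RatFunc.C (al n i - al n k) := by
    refine Finset.prod_congr rfl fun j _ => ?_
    rw [Finset.prod_singleton, nodeF, nodeF, map_sub]
    ring
  have hrset : (Finset.range (b+1)).erase d1 =
      Finset.range d1 ∪ Finset.Ico (d1+1) (b+1) := by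
    ext r
    simp only [Finset.mem_erase, Finset.mem_range, Finset.mem_union, Finset.mem_Ico, Ne]
    omega
  have hdisj2 : Disjoint (Finset.range d1) (Finset.Ico (d1+1) (b+1)) := by
    simp only [Finset.disjoint_left, Finset.mem_range, Finset.mem_Ico]
    omega
  have hE1 : (∏ j : Fin n, ∏ r ∈ (Finset.range (b+1)).erase d1,
      (nodeF n (i, d1) - nodeF n (j, r))) =
      (∏ r ∈ Finset.range d1, ∏ k : Fin n,
          (RatFunc.C (al n i - al n k) + ((r : RatFunc (Qa n)) + 1) * RatFunc.X)) *
      (∏ r ∈ Finset.range (b - d1), ∏ k : Fin n,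
          (RatFunc.C (al n i - al n k) + ((r : RatFunc (Qa n)) + 1) * (-RatFunc.X))) := by
    simp only [hrset, Finset.prod_union hdisj2, Finset.prod_mul_distrib]
    congr 1
    · rw [Finset.prod_comm]
      calc ∏ r ∈ Finset.range d1, ∏ j : Fin n, (nodeF n (i, d1) - nodeF n (j, r))
          = ∏ r ∈ Finset.range d1, (fun r' : ℕ => ∏ k : Fin n,
              (RatFunc.C (al n i - al n k) + ((r' : RatFunc (Qa n)) + 1) * RatFunc.X))
              (d1 - 1 - r) := by
            refine Finset.prod_congr rfl fun r hr => ?_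
            have hr' : r < d1 := Finset.mem_range.mp hr
            refine Finset.prod_congr rfl fun k _ => ?_
            have hc : ((d1 - 1 - r : ℕ) : RatFunc (Qa n)) =
                (d1 : RatFunc (Qa n)) - 1 - r := by
              push_cast [Nat.cast_sub (by omega : 1 ≤ d1),
                Nat.cast_sub (by omega : r ≤ d1 - 1)]
              ring
            rw [hc, nodeF, nodeF, map_sub]
            ring
        _ = _ := Finset.prod_range_reflect (fun r' : ℕ => ∏ k : Fin n,
              (RatFunc.C (al n i - al n k) + ((r' : RatFunc (Qa n)) + 1) * RatFunc.X)) d1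
    · rw [Finset.prod_comm, Finset.prod_Ico_eq_prod_range,
        show b + 1 - (d1 + 1) = b - d1 by omega]
      refine Finset.prod_congr rfl fun r _ => Finset.prod_congr rfl fun k _ => ?_
      rw [nodeF, nodeF, map_sub]
      push_cast
      ring
  rw [hE1, hE2]

/-- the pair `(𝒴, 𝒴_{-l})` satisfies the mutual polynomiality condition:
every coefficient of `z^A q^b` in
`Φ(ℏ,z,q) = Σ_i (e^{α_i z}/∏_{k≠i}(α_i-α_k)) 𝒴(α_i,ℏ,q e^{ℏz}) 𝒴_{-l}(α_i,-ℏ,q)`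
is a polynomial in `ℏ` with coefficients in `ℚ_α`. -/
theorem stmt5 (n l : ℕ) (hn : 2 ≤ n) (a : Fin l → ℕ) (ha : ∀ k, 0 < a k) :
    ∀ A b : ℕ, ∃ p : Polynomial (Qa n),
      (∑ i : Fin n, RatFunc.C (∏ k ∈ univ.erase i, (al n i - al n k))⁻¹ *
        ∑ dd ∈ Finset.HasAntidiagonal.antidiagonal b, ∑ kk ∈ Finset.HasAntidiagonal.antidiagonal A,
          RatFunc.C (al n i ^ kk.1 / (kk.1.factorial : Qa n)) *
            (((dd.1 : RatFunc (Qa n)) * RatFunc.X) ^ kk.2 / (kk.2.factorial : RatFunc (Qa n))) *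
            Ycal n l a (al n i) dd.1 * YnlNeg n l a (al n i) dd.2)
      = algebraMap (Polynomial (Qa n)) (RatFunc (Qa n)) p := by
  intro A b
  classical
  refine ⟨((N0 n l a A b) %ₘ (D0 n b)).coeff (n * (b + 1) - 1), ?_⟩
  have hn0 : Nontrivial (RatFunc (Qa n)) := inferInstance
  set φ := algebraMap (Polynomial (Qa n)) (RatFunc (Qa n)) with hφ
  set NL := (N0 n l a A b).map φ with hNL
  set DL := (D0 n b).map φ with hDL
  have hDLmonic : DL.Monic := (D0_monic n b).map φ
  have hDLprod : DL = ∏ t ∈ nodes n b, (X - Polynomial.C (nodeF n t)) := D0_map n b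
  have hInj : Set.InjOn (nodeF n) (nodes n b) := (nodeF_injective n).injOn
  have hdegDL : DL.degree = ((nodes n b).card : WithBot ℕ) := by
    rw [Polynomial.degree_eq_natDegree hDLmonic.ne_zero]
    congr 1
    rw [hDLprod, natDegree_prod_of_monic _ _ fun _ _ => monic_X_sub_C _]
    simp
  have hdeg : (NL %ₘ DL).degree < ((nodes n b).card : ℕ) := by
    rw [← hdegDL]
    exact degree_modByMonic_lt NL hDLmonic
  have key := sum_eval_inv_prod (nodes n b) (nodeF n) hInj (NL %ₘ DL) hdeg
  have hDeval : ∀ t ∈ nodes n b, DL.eval (nodeF n t) = 0 := by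
    intro t ht
    rw [hDLprod, Polynomial.eval_prod]
    exact Finset.prod_eq_zero ht (by simp)
  have heval : ∀ t ∈ nodes n b, (NL %ₘ DL).eval (nodeF n t) = NL.eval (nodeF n t) := by
    intro t ht
    conv_rhs => rw [← Polynomial.modByMonic_add_div NL DL]
    rw [Polynomial.eval_add, Polynomial.eval_mul, hDeval t ht, zero_mul, add_zero]
  have hterm : ∀ i : Fin n, ∀ d1 ∈ Finset.range (b + 1),
      (RatFunc.C (∏ k ∈ univ.erase i, (al n i - al n k))⁻¹ *
        (∑ kk ∈ Finset.HasAntidiagonal.antidiagonal A,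
          RatFunc.C (al n i ^ kk.1 / (kk.1.factorial : Qa n)) *
            (((d1 : RatFunc (Qa n)) * RatFunc.X) ^ kk.2 / (kk.2.factorial : RatFunc (Qa n))) *
            Ycal n l a (al n i) d1 * YnlNeg n l a (al n i) (b - d1))) =
      NL.eval (nodeF n (i, d1)) *
        (∏ t' ∈ (nodes n b).erase (i, d1), (nodeF n (i, d1) - nodeF n t'))⁻¹ := by
    intro i d1 hd1
    have hd1' : d1 ≤ b := by
      have := Finset.mem_range.mp hd1; omega
    rw [← Finset.sum_mul, ← Finset.sum_mul, binom n (al n i) d1 A]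
    rw [hNL, N0_map_eval n l a A b (nodeF n (i, d1)), den_split n b i d1 hd1']
    have hnum : (∏ k : Fin l, ∏ r ∈ Finset.range (a k * b),
        ((a k : RatFunc (Qa n)) * nodeF n (i, d1) - (r : RatFunc (Qa n)) * RatFunc.X)) =
        (∏ k : Fin l, ∏ r ∈ Finset.range (a k * d1),
          (RatFunc.C ((a k : Qa n) * al n i) + ((r : RatFunc (Qa n)) + 1) * RatFunc.X)) *
        (∏ k : Fin l, ∏ r ∈ Finset.range (a k * (b - d1)),
          (RatFunc.C ((a k : Qa n) * al n i) + (r : RatFunc (Qa n)) * (-RatFunc.X))) := by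
      rw [← Finset.prod_mul_distrib]
      refine Finset.prod_congr rfl fun k _ => ?_
      have h1 : a k * b = a k * d1 + a k * (b - d1) := by
        rw [← Nat.mul_add]
        congr 1
        omega
      have h2 : ∀ r : ℕ, (a k : RatFunc (Qa n)) * nodeF n (i, d1) - (r : RatFunc (Qa n)) *
          RatFunc.X = RatFunc.C ((a k : Qa n) * al n i) +
            ((a k * d1 : ℕ) : RatFunc (Qa n)) * RatFunc.X - (r : RatFunc (Qa n)) * RatFunc.X := by
        intro r
        rw [nodeF, map_mul]
        push_cast
        rw [show ((a k : RatFunc (Qa n))) = RatFunc.C ((a k : Qa n)) from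
            (map_natCast RatFunc.C (a k)).symm]
        ring
      rw [h1]
      calc ∏ r ∈ Finset.range (a k * d1 + a k * (b - d1)),
            ((a k : RatFunc (Qa n)) * nodeF n (i, d1) - (r : RatFunc (Qa n)) * RatFunc.X)
          = ∏ r ∈ Finset.range (a k * d1 + a k * (b - d1)),
            (RatFunc.C ((a k : Qa n) * al n i) +
              ((a k * d1 : ℕ) : RatFunc (Qa n)) * RatFunc.X -
                (r : RatFunc (Qa n)) * RatFunc.X) :=
            Finset.prod_congr rfl fun r _ => h2 r
        _ = _ := num_split n ((a k : Qa n) * al n i) (a k * d1) (a k * (b - d1))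
    rw [Ycal, YnlNeg, show nodeF n (i, d1) =
        RatFunc.C (al n i) + (d1 : RatFunc (Qa n)) * RatFunc.X from rfl] at *
    rw [hnum]
    rw [show RatFunc.C (∏ k ∈ univ.erase i, (al n i - al n k))⁻¹ =
        (∏ k ∈ univ.erase i, RatFunc.C (al n i - al n k))⁻¹ by
      rw [map_inv₀, map_prod]]
    rw [div_eq_mul_inv, div_eq_mul_inv, mul_inv, mul_inv]
    ring
  calc (∑ i : Fin n, RatFunc.C (∏ k ∈ univ.erase i, (al n i - al n k))⁻¹ *
        ∑ dd ∈ Finset.HasAntidiagonal.antidiagonal b, ∑ kk ∈ Finset.HasAntidiagonal.antidiagonal A,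
          RatFunc.C (al n i ^ kk.1 / (kk.1.factorial : Qa n)) *
            (((dd.1 : RatFunc (Qa n)) * RatFunc.X) ^ kk.2 / (kk.2.factorial : RatFunc (Qa n))) *
            Ycal n l a (al n i) dd.1 * YnlNeg n l a (al n i) dd.2)
      = ∑ i : Fin n, ∑ d1 ∈ Finset.range (b + 1),
          (RatFunc.C (∏ k ∈ univ.erase i, (al n i - al n k))⁻¹ *
            (∑ kk ∈ Finset.HasAntidiagonal.antidiagonal A,
              RatFunc.C (al n i ^ kk.1 / (kk.1.factorial : Qa n)) *
                (((d1 : RatFunc (Qa n)) * RatFunc.X) ^ kk.2 /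
                  (kk.2.factorial : RatFunc (Qa n))) *
                Ycal n l a (al n i) d1 * YnlNeg n l a (al n i) (b - d1))) := by
        refine Finset.sum_congr rfl fun i _ => ?_
        rw [Finset.Nat.sum_antidiagonal_eq_sum_range_succ_mk, Finset.mul_sum]
    _ = ∑ t ∈ nodes n b, NL.eval (nodeF n t) *
          (∏ t' ∈ (nodes n b).erase t, (nodeF n t - nodeF n t'))⁻¹ := by
        rw [nodes, Finset.sum_product]
        exact Finset.sum_congr rfl fun i _ =>
          Finset.sum_congr rfl fun d1 hd1 => hterm i d1 hd1
    _ = (NL %ₘ DL).coeff ((nodes n b).card - 1) := by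
        rw [← key]
        exact Finset.sum_congr rfl fun t ht => by rw [heval t ht]
    _ = φ (((N0 n l a A b) %ₘ (D0 n b)).coeff (n * (b + 1) - 1)) := by
        rw [hNL, hDL, ← Polynomial.map_modByMonic φ (D0_monic n b), Polynomial.coeff_map,
          nodes_card]

end Stmt5
end
end
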